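/- The Macdonald functions satisfy the product formula K_ν(z) K_ν(w) = ½ ∫_0^∞ exp(−½[t + (z²+w²)/t]) K_ν(zw/t) dt/t, for z, w > 0 and ν ∈ ℂ. -/

import Mathlib

noncomputable section
open Real MeasureTheory

/-- The Macdonald function `K_ν(z) = ½ ∫_0^∞ t^{ν-1} exp(-(z/2)(t + 1/t)) dt`. -/
def besselK (ν : ℂ) (z : ℝ) : ℂ :=
  (1 / 2) * ∫ t in Set.Ioi (0 : ℝ), (t : ℂ) ^ (ν - 1) *
    Complex.exp (-((z : ℂ) / 2) * ((t : ℂ) + 1 / (t : ℂ)))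

open Set Filter

namespace BesselKAux

lemma integrableOn_rpow_mul_exp (r : ℝ) {α β : ℝ} (hα : 0 < α) (hβ : 0 < β) :
    IntegrableOn (fun t : ℝ => t ^ r * Real.exp (-(α * t + β / t))) (Set.Ioi 0) := by
  have meas : Measurable (fun t : ℝ => t ^ r * Real.exp (-(α * t + β / t))) := by
    fun_prop
  rw [← Set.Ioc_union_Ioi_eq_Ioi (zero_le_one : (0:ℝ) ≤ 1)]
  apply IntegrableOn.union
  · -- constant bound on Ioc 0 1
    obtain ⟨n, hn⟩ : ∃ n : ℕ, -r ≤ n := exists_nat_ge (-r)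
    refine Integrable.mono' (g := fun _ => (n.factorial : ℝ) / β ^ n * 1)
      (integrableOn_const measure_Ioc_lt_top.ne) meas.aestronglyMeasurable.restrict ?_
    rw [ae_restrict_iff' measurableSet_Ioc]
    refine ae_of_all _ fun t ht => ?_
    obtain ⟨ht0, ht1⟩ := ht
    have hbt : 0 < β / t := by positivity
    have hexp : Real.exp (-(α * t + β / t)) ≤ Real.exp (-(β / t)) := by
      apply Real.exp_le_exp.2; nlinarith
    have hexp2 : Real.exp (-(β / t)) ≤ (n.factorial : ℝ) / β ^ n * t ^ (n : ℝ) := by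
      rw [Real.exp_neg]
      have h1 : (β / t) ^ n / n.factorial ≤ Real.exp (β / t) :=
        Real.pow_div_factorial_le_exp _ hbt.le n
      have h2 : 0 < (β / t) ^ n / n.factorial := by positivity
      have := inv_anti₀ h2 h1
      calc (Real.exp (β / t))⁻¹ ≤ ((β / t) ^ n / n.factorial)⁻¹ := this
        _ = (n.factorial : ℝ) / β ^ n * t ^ (n : ℝ) := by
            rw [Real.rpow_natCast]
            field_simp
            rw [← mul_pow, div_mul_cancel₀ _ ht0.ne']
    have key : t ^ r * Real.exp (-(α * t + β / t)) ≤ (n.factorial : ℝ) / β ^ n * 1 := by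
      calc t ^ r * Real.exp (-(α * t + β / t))
          ≤ t ^ r * ((n.factorial : ℝ) / β ^ n * t ^ (n : ℝ)) := by
            apply mul_le_mul_of_nonneg_left _ (Real.rpow_nonneg ht0.le r)
            exact hexp.trans hexp2
        _ = (n.factorial : ℝ) / β ^ n * t ^ (r + (n : ℝ)) := by
            rw [Real.rpow_add ht0]; ring
        _ ≤ (n.factorial : ℝ) / β ^ n * 1 := by
            apply mul_le_mul_of_nonneg_left _ (by positivity)
            exact Real.rpow_le_one ht0.le ht1 (by linarith)
    rw [Real.norm_eq_abs, abs_of_nonneg (by positivity)]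
    exact key
  · -- Ioi 1
    have hg : IntegrableOn (fun t : ℝ => t ^ max r 0 * Real.exp (-α * t)) (Set.Ioi 0) := by
      have := integrableOn_rpow_mul_exp_neg_mul_rpow
        (s := max r 0) (p := 1) (b := α)
        (lt_of_lt_of_le neg_one_lt_zero (le_max_right r 0)) zero_lt_one hα
      simpa [Real.rpow_one] using this
    refine Integrable.mono' (hg.mono_set (Set.Ioi_subset_Ioi zero_le_one))
      meas.aestronglyMeasurable.restrict ?_
    rw [ae_restrict_iff' measurableSet_Ioi]
    refine ae_of_all _ fun t ht => ?_
    have ht1 : (1:ℝ) < t := ht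
    have ht0 : (0:ℝ) < t := lt_trans zero_lt_one ht1
    rw [Real.norm_eq_abs, abs_of_nonneg (by positivity)]
    have h1 : t ^ r ≤ t ^ max r 0 :=
      Real.rpow_le_rpow_of_exponent_le ht1.le (le_max_left r 0)
    have h2 : Real.exp (-(α * t + β / t)) ≤ Real.exp (-α * t) := by
      apply Real.exp_le_exp.2
      have : 0 ≤ β / t := by positivity
      nlinarith
    exact mul_le_mul h1 h2 (Real.exp_pos _).le (by positivity)

def bker (c : ℂ) (α β : ℝ) (t : ℝ) : ℂ :=
  (t : ℂ) ^ c * Complex.exp (-((α : ℂ) * t + (β : ℂ) / t))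

lemma cpow_pos_real {x : ℝ} (hx : 0 < x) (c : ℂ) :
    (x : ℂ) ^ c = Complex.exp (c * (Real.log x : ℂ)) := by
  rw [Complex.cpow_def_of_ne_zero (by exact_mod_cast hx.ne'), Complex.ofReal_log hx.le, mul_comm]

lemma ofReal_pos_eq_exp_log {x : ℝ} (hx : 0 < x) :
    (x : ℂ) = Complex.exp ((Real.log x : ℂ)) := by
  rw [← Complex.ofReal_exp, Real.exp_log hx]

lemma bker_norm (c : ℂ) (α β : ℝ) {t : ℝ} (ht : 0 < t) :
    ‖bker c α β t‖ = t ^ c.re * Real.exp (-(α * t + β / t)) := by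
  have h1 : (-((α : ℂ) * t + (β : ℂ) / t)) = ((-(α * t + β / t) : ℝ) : ℂ) := by push_cast; ring
  rw [bker, norm_mul, h1,
    Complex.norm_cpow_eq_rpow_re_of_pos ht, Complex.norm_exp, Complex.ofReal_re]


lemma bker_aestronglyMeasurable (c : ℂ) (α β : ℝ) :
    AEStronglyMeasurable (bker c α β) (volume.restrict (Set.Ioi 0)) := by
  have hm : Measurable fun t : ℝ =>
      Complex.exp (c * (Real.log t : ℂ)) * Complex.exp (-((α : ℂ) * t + (β : ℂ) / t)) :=
    (Complex.measurable_exp.comp ((measurable_const.mul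
        (Complex.measurable_ofReal.comp Real.measurable_log)))).mul
      (Complex.measurable_exp.comp (((measurable_const.mul Complex.measurable_ofReal).add
        (measurable_const.div Complex.measurable_ofReal)).neg))
  refine hm.aestronglyMeasurable.congr ?_
  rw [Filter.EventuallyEq, ae_restrict_iff' measurableSet_Ioi]
  exact ae_of_all _ fun t ht => by rw [bker, cpow_pos_real ht]

lemma bker_integrableOn (c : ℂ) {α β : ℝ} (hα : 0 < α) (hβ : 0 < β) :
    IntegrableOn (bker c α β) (Set.Ioi 0) := by
  refine Integrable.mono' (integrableOn_rpow_mul_exp c.re hα hβ)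
    (bker_aestronglyMeasurable c α β) ?_
  rw [ae_restrict_iff' measurableSet_Ioi]
  exact ae_of_all _ fun t ht => le_of_eq (bker_norm c α β ht)

section Subst
variable {E : Type*} [NormedAddCommGroup E] [NormedSpace ℝ E]

lemma image_div_Ioi {a : ℝ} (ha : 0 < a) :
    (fun x : ℝ => a / x) '' Set.Ioi 0 = Set.Ioi (0 : ℝ) := by
  ext y
  simp only [Set.mem_image, Set.mem_Ioi]
  constructor
  · rintro ⟨x, hx, rfl⟩; positivity
  · intro hy; exact ⟨a / y, by positivity, by field_simp⟩

lemma hasDeriv_div_aux {a : ℝ} (x : ℝ) (hx : x ∈ Set.Ioi (0:ℝ)) :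
    HasDerivWithinAt (fun x : ℝ => a / x) (-(a / x ^ 2)) (Set.Ioi 0) x := by
  have hx0 : x ≠ 0 := (ne_of_gt hx)
  have := ((hasDerivAt_inv hx0).const_mul a).hasDerivWithinAt (s := Set.Ioi 0)
  have e1 : (fun x : ℝ => a / x) = fun y => a * y⁻¹ := by funext y; rw [div_eq_mul_inv]
  have e2 : -(a / x ^ 2) = a * -(x ^ 2)⁻¹ := by rw [div_eq_mul_inv, ← mul_neg]
  rw [e1, e2]; exact this

lemma injOn_div_Ioi {a : ℝ} (ha : 0 < a) :
    Set.InjOn (fun x : ℝ => a / x) (Set.Ioi 0) := by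
  intro x hx y hy hxy
  simp only [Set.mem_Ioi] at hx hy
  rw [div_eq_div_iff hx.ne' hy.ne'] at hxy
  exact (mul_left_cancel₀ ha.ne' hxy).symm

lemma integral_comp_div_Ioi (g : ℝ → E) {a : ℝ} (ha : 0 < a) :
    ∫ x in Set.Ioi (0:ℝ), g x = ∫ x in Set.Ioi (0:ℝ), (a / x ^ 2) • g (a / x) := by
  have := integral_image_eq_integral_abs_deriv_smul measurableSet_Ioi
    (hasDeriv_div_aux (a := a)) (injOn_div_Ioi ha) g
  rw [image_div_Ioi ha] at this
  rw [this]
  refine setIntegral_congr_fun measurableSet_Ioi fun x hx => ?_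
  have hx0 : (0:ℝ) < x := hx
  rw [abs_neg, abs_of_pos (by positivity)]

lemma integrableOn_comp_div_Ioi_iff (g : ℝ → E) {a : ℝ} (ha : 0 < a) :
    IntegrableOn (fun x => (a / x ^ 2) • g (a / x)) (Set.Ioi 0) ↔
      IntegrableOn g (Set.Ioi 0) := by
  have h2 := integrableOn_image_iff_integrableOn_abs_deriv_smul measurableSet_Ioi
    (hasDeriv_div_aux (a := a)) (injOn_div_Ioi ha) g
  rw [image_div_Ioi ha] at h2
  rw [h2]
  refine integrableOn_congr_fun (fun x hx => ?_) measurableSet_Ioi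
  have hx0 : (0:ℝ) < x := hx
  rw [abs_neg, abs_of_pos (by positivity)]

end Subst

def gfun (ν : ℂ) (z w : ℝ) (s v : ℝ) : ℂ :=
  (v : ℂ) ^ (ν - 1) * bker (-1) ((z + w / v) / 2) ((z + w * v) / 2) s

def Hfun (ν : ℂ) (z w : ℝ) (v t : ℝ) : ℂ :=
  (v : ℂ) ^ (ν - 1) * bker (-1) (1 / 2) ((z + w / v) * (z + w * v) / 2) t

variable {ν : ℂ} {z w : ℝ}

lemma bker_eq_exp (c : ℂ) (α β : ℝ) {t : ℝ} (ht : 0 < t) :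
    bker c α β t = Complex.exp (c * (Real.log t : ℂ) - ((α : ℂ) * t + (β : ℂ) / t)) := by
  rw [bker, cpow_pos_real ht, ← Complex.exp_add, sub_eq_add_neg]

lemma P1 (ν : ℂ) (hz : 0 < z) (hw : 0 < w) {s v : ℝ} (hs : 0 < s) (hv : 0 < v) :
    bker (ν - 1) (z / 2) (z / 2) s * ((s / v ^ 2) • bker (-ν - 1) (w / 2) (w / 2) (s / v))
      = gfun ν z w s v := by
  have hsv : 0 < s / v := by positivity
  have hsv2 : 0 < s / v ^ 2 := by positivity
  have hs' : (s : ℂ) ≠ 0 := Complex.ofReal_ne_zero.mpr hs.ne'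
  have hv' : (v : ℂ) ≠ 0 := Complex.ofReal_ne_zero.mpr hv.ne'
  have hlog1 : ((Real.log (s / v) : ℝ) : ℂ) = (Real.log s : ℂ) - (Real.log v : ℂ) := by
    rw [Real.log_div hs.ne' hv.ne']; push_cast; ring
  have hlog2 : ((Real.log (s / v ^ 2) : ℝ) : ℂ) = (Real.log s : ℂ) - 2 * (Real.log v : ℂ) := by
    rw [Real.log_div hs.ne' (by positivity : (v:ℝ)^2 ≠ 0), Real.log_pow]; push_cast; ring
  rw [Complex.real_smul, gfun, bker_eq_exp _ _ _ hs, bker_eq_exp _ _ _ hsv,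
    bker_eq_exp _ _ _ hs, ofReal_pos_eq_exp_log hsv2, cpow_pos_real hv, hlog1, hlog2]
  simp only [← Complex.exp_add]
  congr 1
  push_cast
  field_simp
  ring

lemma P2 (ν : ℂ) (hz : 0 < z) (hw : 0 < w) {v t : ℝ} (hv : 0 < v) (ht : 0 < t) :
    (z + w / v)⁻¹ • gfun ν z w ((z + w / v)⁻¹ * t) v = Hfun ν z w v t := by
  have ha : 0 < z + w / v := by positivity
  have hs0 : 0 < (z + w / v)⁻¹ * t := by positivity
  have ht' : (t : ℂ) ≠ 0 := Complex.ofReal_ne_zero.mpr ht.ne'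
  have hv' : (v : ℂ) ≠ 0 := Complex.ofReal_ne_zero.mpr hv.ne'
  have ha' : ((z + w / v : ℝ) : ℂ) ≠ 0 := Complex.ofReal_ne_zero.mpr ha.ne'
  have hlog : ((Real.log ((z + w / v)⁻¹ * t) : ℝ) : ℂ)
      = -(Real.log (z + w / v) : ℂ) + (Real.log t : ℂ) := by
    rw [Real.log_mul (inv_ne_zero ha.ne') ht.ne', Real.log_inv]; push_cast; ring
  rw [Complex.real_smul, gfun, Hfun, bker_eq_exp _ _ _ hs0, bker_eq_exp _ _ _ ht,
    ofReal_pos_eq_exp_log (inv_pos.mpr ha), Real.log_inv, cpow_pos_real hv, hlog]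
  simp only [Complex.ofReal_mul, Complex.ofReal_inv, Complex.ofReal_div, Complex.ofReal_ofNat,
    Complex.ofReal_one]
  simp only [← Complex.exp_add]
  congr 1
  have hb' : ((v : ℂ) * w * 2 + (v : ℂ) ^ 2 * z * 2) ≠ 0 := by
    have h0 : ((v * w * 2 + v ^ 2 * z * 2 : ℝ) : ℂ) ≠ 0 :=
      Complex.ofReal_ne_zero.mpr (by positivity)
    push_cast at h0
    convert h0 using 2 <;> ring
  push_cast
  have hzv : (z:ℂ) + w / v ≠ 0 := by exact_mod_cast ha'
  have hzv2 : (z:ℂ) * v + w ≠ 0 := by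
    have : ((z * v + w : ℝ) : ℂ) ≠ 0 := Complex.ofReal_ne_zero.mpr (by positivity)
    exact_mod_cast this
  rw [Complex.ofReal_log ha.le]
  push_cast
  field_simp
  ring

lemma P3 (ν : ℂ) (hz : 0 < z) (hw : 0 < w) {v t : ℝ} (hv : 0 < v) (ht : 0 < t) :
    Hfun ν z w v t = bker (-1) (1 / 2) ((z ^ 2 + w ^ 2) / 2) t *
      bker (ν - 1) (z * w / t / 2) (z * w / t / 2) v := by
  have ht' : (t : ℂ) ≠ 0 := Complex.ofReal_ne_zero.mpr ht.ne'
  have hv' : (v : ℂ) ≠ 0 := Complex.ofReal_ne_zero.mpr hv.ne'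
  rw [Hfun, bker_eq_exp _ _ _ ht, bker_eq_exp _ _ _ ht, bker_eq_exp _ _ _ hv,
    cpow_pos_real hv]
  simp only [← Complex.exp_add]
  congr 1
  push_cast
  have hTV : (((v:ℂ)) * ((v:ℂ))⁻¹) * ((((t:ℂ)) * ((t:ℂ))⁻¹)) ^ 3 = 1 := by
    rw [mul_inv_cancel₀ hv', mul_inv_cancel₀ ht']; norm_num
  field_simp
  ring

lemma P4 (hz : 0 < z) (hw : 0 < w) {t : ℝ} (ht : 0 < t) :
    bker (-1) (1 / 2) ((z ^ 2 + w ^ 2) / 2) t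
      = (Real.exp (-(1 / 2) * (t + (z ^ 2 + w ^ 2) / t)) : ℂ) * (1 / (t : ℂ)) := by
  have ht' : (t : ℂ) ≠ 0 := Complex.ofReal_ne_zero.mpr ht.ne'
  rw [bker_eq_exp _ _ _ ht, Complex.ofReal_exp]
  push_cast
  simp only [ofReal_pos_eq_exp_log ht]
  simp only [one_div, div_eq_mul_inv, one_mul, ← Complex.exp_neg, ← Complex.exp_nat_mul,
    ← Complex.exp_add]
  congr 1
  field_simp [Complex.exp_ne_zero]
  ring


lemma Prefl (μc : ℂ) (α β : ℝ) {x : ℝ} (hx : 0 < x) :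
    ((1 : ℝ) / x ^ 2) • bker μc α β (1 / x) = bker (-μc - 2) β α x := by
  have hinv : 0 < 1 / x := by positivity
  have hx' : (x : ℂ) ≠ 0 := Complex.ofReal_ne_zero.mpr hx.ne'
  have hinv2 : 0 < 1 / x ^ 2 := by positivity
  have hlogA : ((Real.log (1 / x) : ℝ) : ℂ) = -(Real.log x : ℂ) := by
    rw [one_div, Real.log_inv]; push_cast; ring
  have hlogB : ((Real.log (1 / x ^ 2) : ℝ) : ℂ) = -2 * (Real.log x : ℂ) := by
    rw [one_div, Real.log_inv, Real.log_pow]; push_cast; ring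
  rw [Complex.real_smul, bker_eq_exp _ _ _ hinv, bker_eq_exp _ _ _ hx,
    ofReal_pos_eq_exp_log hinv2, hlogA, hlogB]
  simp only [← Complex.exp_add]
  congr 1
  push_cast
  field_simp
  ring


lemma besselK_eq_bker (ν : ℂ) (x : ℝ) :
    besselK ν x = (1 / 2) * ∫ t in Set.Ioi (0:ℝ), bker (ν - 1) (x / 2) (x / 2) t := by
  rw [besselK]
  congr 1
  refine setIntegral_congr_fun measurableSet_Ioi fun t _ => ?_
  rw [bker]
  congr 1
  push_cast
  ring

lemma integral_bker_reflect (μc : ℂ) (α β : ℝ) :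
    ∫ x in Set.Ioi (0:ℝ), bker μc α β x = ∫ x in Set.Ioi (0:ℝ), bker (-μc - 2) β α x := by
  rw [integral_comp_div_Ioi (bker μc α β) one_pos]
  exact setIntegral_congr_fun measurableSet_Ioi fun x hx => Prefl μc α β hx

variable {ν : ℂ} {z w : ℝ}

lemma gfun_aesm (ν : ℂ) (z w : ℝ) :
    AEStronglyMeasurable (Function.uncurry (gfun ν z w))
      ((volume.restrict (Set.Ioi 0)).prod (volume.restrict (Set.Ioi 0))) := by
  have hm : Measurable fun p : ℝ × ℝ =>
      Complex.exp ((ν - 1) * (Real.log p.2 : ℂ)) *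
        (Complex.exp ((-1) * (Real.log p.1 : ℂ)) *
          Complex.exp (-((((z + w / p.2) / 2 : ℝ) : ℂ) * p.1 +
            (((z + w * p.2) / 2 : ℝ) : ℂ) / p.1))) := by
    refine ((Complex.measurable_exp.comp ?_).mul
      ((Complex.measurable_exp.comp ?_).mul (Complex.measurable_exp.comp ?_)))
    · exact measurable_const.mul
        (Complex.measurable_ofReal.comp (Real.measurable_log.comp measurable_snd))
    · exact measurable_const.mul
        (Complex.measurable_ofReal.comp (Real.measurable_log.comp measurable_fst))
    · refine Measurable.neg (Measurable.add (Measurable.mul ?_ ?_) (Measurable.div ?_ ?_))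
      · exact Complex.measurable_ofReal.comp
          ((measurable_const.add ((measurable_const.div measurable_snd))).div measurable_const)
      · exact Complex.measurable_ofReal.comp measurable_fst
      · exact Complex.measurable_ofReal.comp
          ((measurable_const.add ((measurable_const.mul measurable_snd))).div measurable_const)
      · exact Complex.measurable_ofReal.comp measurable_fst
  refine hm.aestronglyMeasurable.congr ?_
  rw [Measure.prod_restrict, Filter.EventuallyEq, ae_restrict_iff' (measurableSet_Ioi.prod measurableSet_Ioi)]
  refine ae_of_all _ fun p hp => ?_
  obtain ⟨hp1, hp2⟩ := hp
  rw [Function.uncurry, gfun, bker, cpow_pos_real (Set.mem_Ioi.mp hp1),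
    cpow_pos_real (Set.mem_Ioi.mp hp2)]

lemma Hfun_aesm (ν : ℂ) (z w : ℝ) :
    AEStronglyMeasurable (Function.uncurry (Hfun ν z w))
      ((volume.restrict (Set.Ioi 0)).prod (volume.restrict (Set.Ioi 0))) := by
  have hm : Measurable fun p : ℝ × ℝ =>
      Complex.exp ((ν - 1) * (Real.log p.1 : ℂ)) *
        (Complex.exp ((-1) * (Real.log p.2 : ℂ)) *
          Complex.exp (-((((1:ℝ)/2 : ℝ) : ℂ) * p.2 +
            ((((z + w / p.1) * (z + w * p.1) / 2 : ℝ)) : ℂ) / p.2))) := by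
    refine ((Complex.measurable_exp.comp ?_).mul
      ((Complex.measurable_exp.comp ?_).mul (Complex.measurable_exp.comp ?_)))
    · exact measurable_const.mul
        (Complex.measurable_ofReal.comp (Real.measurable_log.comp measurable_fst))
    · exact measurable_const.mul
        (Complex.measurable_ofReal.comp (Real.measurable_log.comp measurable_snd))
    · refine Measurable.neg (Measurable.add (Measurable.mul ?_ ?_) (Measurable.div ?_ ?_))
      · exact measurable_const
      · exact Complex.measurable_ofReal.comp measurable_snd
      · refine Complex.measurable_ofReal.comp (Measurable.div (Measurable.mul ?_ ?_) measurable_const)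
        · exact measurable_const.add (measurable_const.div measurable_fst)
        · exact measurable_const.add (measurable_const.mul measurable_fst)
      · exact Complex.measurable_ofReal.comp measurable_snd
  refine hm.aestronglyMeasurable.congr ?_
  rw [Measure.prod_restrict, Filter.EventuallyEq, ae_restrict_iff' (measurableSet_Ioi.prod measurableSet_Ioi)]
  refine ae_of_all _ fun p hp => ?_
  obtain ⟨hp1, hp2⟩ := hp
  rw [Function.uncurry, Hfun, bker, cpow_pos_real (Set.mem_Ioi.mp hp1),
    cpow_pos_real (Set.mem_Ioi.mp hp2)]


lemma gfun_slice_integrable (ν : ℂ) (hz : 0 < z) (hw : 0 < w) {s : ℝ} (hs : 0 < s) :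
    IntegrableOn (fun v => gfun ν z w s v) (Set.Ioi 0) := by
  have key : IntegrableOn
      (fun v : ℝ => (s / v ^ 2) • bker (-ν - 1) (w / 2) (w / 2) (s / v)) (Set.Ioi 0) :=
    (integrableOn_comp_div_Ioi_iff (bker (-ν - 1) (w / 2) (w / 2)) hs).mpr
      (bker_integrableOn _ (by positivity) (by positivity))
  exact IntegrableOn.congr_fun (key.const_mul (bker (ν - 1) (z / 2) (z / 2) s))
    (fun v hv => P1 ν hz hw hs (Set.mem_Ioi.mp hv)) measurableSet_Ioi

lemma gfun_integrable (ν : ℂ) (hz : 0 < z) (hw : 0 < w) :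
    Integrable (Function.uncurry (gfun ν z w))
      ((volume.restrict (Set.Ioi 0)).prod (volume.restrict (Set.Ioi 0))) := by
  refine (integrable_prod_iff (gfun_aesm ν z w)).mpr ⟨?_, ?_⟩
  · rw [ae_restrict_iff' measurableSet_Ioi]
    exact ae_of_all _ fun s hs => gfun_slice_integrable ν hz hw (Set.mem_Ioi.mp hs)
  · set Cw : ℝ := ∫ u in Set.Ioi (0:ℝ), ‖bker (-ν - 1) (w / 2) (w / 2) u‖ with hCw
    have base : Integrable (fun s : ℝ => ‖bker (ν - 1) (z / 2) (z / 2) s‖ * Cw)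
        (volume.restrict (Set.Ioi 0)) :=
      ((bker_integrableOn (ν - 1) (by positivity : (0:ℝ) < z/2)
        (by positivity : (0:ℝ) < z/2)).norm.mul_const Cw)
    refine base.congr ?_
    rw [Filter.EventuallyEq, ae_restrict_iff' measurableSet_Ioi]
    refine ae_of_all _ fun s hs => ?_
    have hs0 : (0:ℝ) < s := Set.mem_Ioi.mp hs
    have subst := integral_comp_div_Ioi (fun u => ‖bker (-ν - 1) (w / 2) (w / 2) u‖) hs0
    rw [hCw, subst, ← MeasureTheory.integral_const_mul]
    refine setIntegral_congr_fun measurableSet_Ioi fun v hv => ?_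
    have hv0 : (0:ℝ) < v := Set.mem_Ioi.mp hv
    rw [Function.uncurry_apply_pair, ← P1 ν hz hw hs0 hv0, norm_mul, norm_smul,
      Real.norm_eq_abs, abs_of_pos (by positivity : (0:ℝ) < s / v ^ 2), smul_eq_mul]

lemma Hfun_slice_integrable (ν : ℂ) (hz : 0 < z) (hw : 0 < w) {v : ℝ} (hv : 0 < v) :
    IntegrableOn (fun t => Hfun ν z w v t) (Set.Ioi 0) := by
  have : IntegrableOn
      (fun t : ℝ => (v : ℂ) ^ (ν - 1) * bker (-1) (1 / 2) ((z + w / v) * (z + w * v) / 2) t)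
      (Set.Ioi 0) :=
    (bker_integrableOn (-1) (by norm_num) (by positivity)).const_mul _
  exact this.congr_fun (fun t _ => rfl) measurableSet_Ioi

lemma Hfun_integrable (ν : ℂ) (hz : 0 < z) (hw : 0 < w) :
    Integrable (Function.uncurry (Hfun ν z w))
      ((volume.restrict (Set.Ioi 0)).prod (volume.restrict (Set.Ioi 0))) := by
  refine (integrable_prod_iff (Hfun_aesm ν z w)).mpr ⟨?_, ?_⟩
  · rw [ae_restrict_iff' measurableSet_Ioi]
    exact ae_of_all _ fun v hv => Hfun_slice_integrable ν hz hw (Set.mem_Ioi.mp hv)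
  · have base : Integrable
        (fun v => ∫ s in Set.Ioi (0:ℝ), ‖Function.uncurry (gfun ν z w) (s, v)‖)
        (volume.restrict (Set.Ioi 0)) :=
      (gfun_integrable ν hz hw).integral_norm_prod_right
    refine base.congr ?_
    rw [Filter.EventuallyEq, ae_restrict_iff' measurableSet_Ioi]
    refine ae_of_all _ fun v hv => ?_
    have hv0 : (0:ℝ) < v := Set.mem_Ioi.mp hv
    have ha : 0 < z + w / v := by positivity
    -- ∫ s, ‖gfun s v‖ = ∫ t, ‖Hfun v t‖
    have comp := integral_comp_mul_left_Ioi (fun s => ‖gfun ν z w s v‖) 0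
      (inv_pos.mpr ha)
    rw [mul_zero, inv_inv] at comp
    have step : (∫ s in Set.Ioi (0:ℝ), ‖Function.uncurry (gfun ν z w) (s, v)‖)
        = (z + w / v)⁻¹ • ∫ x in Set.Ioi (0:ℝ), ‖gfun ν z w ((z + w / v)⁻¹ * x) v‖ := by
      rw [comp, smul_smul, inv_mul_cancel₀ ha.ne', one_smul]
      rfl
    rw [step, ← MeasureTheory.integral_smul]
    refine setIntegral_congr_fun measurableSet_Ioi fun t ht => ?_
    have ht0 : (0:ℝ) < t := Set.mem_Ioi.mp ht
    rw [Function.uncurry_apply_pair, ← P2 ν hz hw hv0 ht0, norm_smul, Real.norm_eq_abs,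
      abs_of_pos (inv_pos.mpr ha), smul_eq_mul]

theorem besselK_product (ν : ℂ) (z w : ℝ) (hz : 0 < z) (hw : 0 < w) :
    besselK ν z * besselK ν w
      = (1 / 2) * ∫ t in Set.Ioi (0 : ℝ),
          (Real.exp (-(1 / 2) * (t + (z ^ 2 + w ^ 2) / t)) : ℂ) *
            besselK ν (z * w / t) * (1 / (t : ℂ)) := by
  have hz2 : (0:ℝ) < z / 2 := by positivity
  have hw2 : (0:ℝ) < w / 2 := by positivity
  -- Step 0: rewrite in kernel form, reflect the second factor
  rw [besselK_eq_bker ν z, besselK_eq_bker ν w, integral_bker_reflect (ν - 1) (w/2) (w/2)]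
  have hrefl : -(ν - 1) - 2 = -ν - 1 := by ring
  rw [hrefl]
  -- Step 1: product as iterated integral
  have step1 : (1 / 2 * ∫ s in Set.Ioi (0:ℝ), bker (ν - 1) (z / 2) (z / 2) s) *
      (1 / 2 * ∫ u in Set.Ioi (0:ℝ), bker (-ν - 1) (w / 2) (w / 2) u)
      = (1 / 4) * ∫ s in Set.Ioi (0:ℝ), (bker (ν - 1) (z / 2) (z / 2) s *
          ∫ u in Set.Ioi (0:ℝ), bker (-ν - 1) (w / 2) (w / 2) u) := by
    rw [MeasureTheory.integral_mul_const]
    ring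
  rw [step1]
  -- Step 2: substitute u = s / v in the inner integral
  have step2 : ∀ s ∈ Set.Ioi (0:ℝ),
      bker (ν - 1) (z / 2) (z / 2) s * ∫ u in Set.Ioi (0:ℝ), bker (-ν - 1) (w / 2) (w / 2) u
        = ∫ v in Set.Ioi (0:ℝ), gfun ν z w s v := by
    intro s hs
    have hs0 : (0:ℝ) < s := Set.mem_Ioi.mp hs
    rw [integral_comp_div_Ioi (bker (-ν - 1) (w / 2) (w / 2)) hs0,
      ← MeasureTheory.integral_const_mul]
    exact setIntegral_congr_fun measurableSet_Ioi fun v hv =>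
      P1 ν hz hw hs0 (Set.mem_Ioi.mp hv)
  rw [setIntegral_congr_fun measurableSet_Ioi step2]
  -- Step 3: Fubini
  rw [MeasureTheory.integral_integral_swap (gfun_integrable ν hz hw)]
  -- Step 4: substitute s = t / (z + w/v)
  have step4 : ∀ v ∈ Set.Ioi (0:ℝ),
      (∫ s in Set.Ioi (0:ℝ), gfun ν z w s v) = ∫ t in Set.Ioi (0:ℝ), Hfun ν z w v t := by
    intro v hv
    have hv0 : (0:ℝ) < v := Set.mem_Ioi.mp hv
    have ha : 0 < z + w / v := by positivity
    have comp := integral_comp_mul_left_Ioi (fun s => gfun ν z w s v) 0 (inv_pos.mpr ha)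
    rw [mul_zero, inv_inv] at comp
    have step : (∫ s in Set.Ioi (0:ℝ), gfun ν z w s v)
        = (z + w / v)⁻¹ • ∫ x in Set.Ioi (0:ℝ), gfun ν z w ((z + w / v)⁻¹ * x) v := by
      rw [comp, smul_smul, inv_mul_cancel₀ ha.ne', one_smul]
    rw [step, ← MeasureTheory.integral_smul]
    exact setIntegral_congr_fun measurableSet_Ioi fun t ht =>
      P2 ν hz hw hv0 (Set.mem_Ioi.mp ht)
  rw [setIntegral_congr_fun measurableSet_Ioi step4]
  -- Step 5: Fubini again
  rw [MeasureTheory.integral_integral_swap (Hfun_integrable ν hz hw)]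
  -- Step 6: inner integral is a Bessel function
  have step6 : ∀ t ∈ Set.Ioi (0:ℝ),
      (∫ v in Set.Ioi (0:ℝ), Hfun ν z w v t)
        = 2 * ((Real.exp (-(1 / 2) * (t + (z ^ 2 + w ^ 2) / t)) : ℂ) *
            besselK ν (z * w / t) * (1 / (t : ℂ))) := by
    intro t ht
    have ht0 : (0:ℝ) < t := Set.mem_Ioi.mp ht
    have inner : (∫ v in Set.Ioi (0:ℝ), Hfun ν z w v t)
        = bker (-1) (1 / 2) ((z ^ 2 + w ^ 2) / 2) t *
            ∫ v in Set.Ioi (0:ℝ), bker (ν - 1) (z * w / t / 2) (z * w / t / 2) v := by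
      rw [← MeasureTheory.integral_const_mul]
      exact setIntegral_congr_fun measurableSet_Ioi fun v hv =>
        P3 ν hz hw (Set.mem_Ioi.mp hv) ht0
    rw [inner, P4 hz hw ht0, besselK_eq_bker ν (z * w / t)]
    ring
  rw [setIntegral_congr_fun measurableSet_Ioi step6, MeasureTheory.integral_const_mul]
  ring

end BesselKAux

theorem besselK_product (ν : ℂ) (z w : ℝ) (hz : 0 < z) (hw : 0 < w) :
    besselK ν z * besselK ν w
      = (1 / 2) * ∫ t in Set.Ioi (0 : ℝ),
          (Real.exp (-(1 / 2) * (t + (z ^ 2 + w ^ 2) / t)) : ℂ) *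
            besselK ν (z * w / t) * (1 / (t : ℂ)) :=
  BesselKAux.besselK_product ν z w hz hw
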